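/- A biased graph (G,B) is a signed graph, i.e., there exists a subset Sigma of the edges of G such that a cycle C is balanced exactly when |E(C) ∩ Sigma| is even, if and only if (G,B) contains no contrabalanced theta subgraph (a theta subgraph all three of whose cycles are unbalanced). -/

import Mathlib

/-! Common definitions: multigraphs, walks, biased graphs, frame matroids. -/

universe u v

structure Multigraph (V : Type u) (E : Type v) where
  inc : E → Sym2 V

namespace Multigraph

variable {V : Type u} {E : Type v}

/-- An edge is a loop if its two endpoints coincide. -/
def IsLoop (G : Multigraph V E) (e : E) : Prop := (G.inc e).IsDiag

/-- The set of links (non-loop edges) incident to a vertex. -/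
def delta (G : Multigraph V E) (x : V) : Set E := {e | x ∈ G.inc e ∧ ¬ G.IsLoop e}

/-- The set of all edges (including loops) incident to a vertex. -/
def deltaPlus (G : Multigraph V E) (x : V) : Set E := {e | x ∈ G.inc e}

/-- The set of vertices incident with an edge of `X`. -/
def VSet (G : Multigraph V E) (X : Set E) : Set V := {x | ∃ e ∈ X, x ∈ G.inc e}

/-- Walks in a multigraph. -/
inductive Walk (G : Multigraph V E) : V → V → Type (max u v) where
  | nil (x : V) : Walk G x x
  | cons {x y z : V} (e : E) (h : G.inc e = s(x, y)) (t : Walk G y z) : Walk G x z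

namespace Walk

variable {G : Multigraph V E}

/-- The list of edges of a walk. -/
def edgeList : {x y : V} → G.Walk x y → List E
  | _, _, .nil _ => []
  | _, _, .cons e _ t => e :: t.edgeList

/-- The list of vertices of a walk (both endpoints included). -/
def vertList : {x y : V} → G.Walk x y → List V
  | _, _, .nil a => [a]
  | a, _, .cons _ _ t => a :: t.vertList

/-- The edge set of a walk. -/
def edgeSet {x y : V} (w : G.Walk x y) : Set E := {e | e ∈ w.edgeList}

/-- A walk is a path if it repeats no vertex. -/
def IsPath {x y : V} (w : G.Walk x y) : Prop := w.vertList.Nodup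

/-- A closed walk is a cycle if it is nonempty, repeats no edge and repeats
no vertex except for its starting vertex.  (A loop gives a cycle of length one.) -/
def IsCycle {x : V} (w : G.Walk x x) : Prop :=
  w.edgeList ≠ [] ∧ w.edgeList.Nodup ∧ w.vertList.dropLast.Nodup

end Walk

/-- `P` is the edge set of a path from `x` to `y`. -/
def IsPathSet (G : Multigraph V E) (x y : V) (P : Set E) : Prop :=
  ∃ w : G.Walk x y, w.IsPath ∧ w.edgeSet = P

/-- `C` is the edge set of a cycle. -/
def IsCycleSet (G : Multigraph V E) (C : Set E) : Prop :=
  ∃ (x : V) (w : G.Walk x x), w.IsCycle ∧ w.edgeSet = C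

/-- Two vertices are connected using only edges of `X`. -/
def ConnectedTo (G : Multigraph V E) (X : Set E) (x y : V) : Prop :=
  ∃ w : G.Walk x y, w.edgeSet ⊆ X

/-- A multigraph is connected if any two vertices are joined by a walk. -/
def ConnectedGraph (G : Multigraph V E) : Prop := ∀ x y : V, Nonempty (G.Walk x y)

/-- The subgraph induced by an edge set `X` is connected. -/
def SubConnected (G : Multigraph V E) (X : Set E) : Prop :=
  ∀ e ∈ X, ∀ f ∈ X, ∃ x y, x ∈ G.inc e ∧ y ∈ G.inc f ∧ G.ConnectedTo X x y

/-- A theta subgraph: two distinct vertices joined by three internally disjoint paths. -/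
def IsTheta (G : Multigraph V E) (x y : V) (P₁ P₂ P₃ : Set E) : Prop :=
  x ≠ y ∧ G.IsPathSet x y P₁ ∧ G.IsPathSet x y P₂ ∧ G.IsPathSet x y P₃ ∧
    Disjoint P₁ P₂ ∧ Disjoint P₂ P₃ ∧ Disjoint P₁ P₃ ∧
    G.VSet P₁ ∩ G.VSet P₂ ⊆ {x, y} ∧ G.VSet P₂ ∩ G.VSet P₃ ⊆ {x, y} ∧
    G.VSet P₁ ∩ G.VSet P₃ ⊆ {x, y}

/-- A proper separation of a multigraph, given as a partition of the edge set:
each side must contain a vertex not met by the other side. -/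
def IsProperSep (G : Multigraph V E) (X Y : Set E) : Prop :=
  X ∪ Y = Set.univ ∧ Disjoint X Y ∧
    (G.VSet X \ G.VSet Y).Nonempty ∧ (G.VSet Y \ G.VSet X).Nonempty

/-- A multigraph is `k`-connected if it is connected and every proper separation
has order at least `k`. -/
def KConnected (G : Multigraph V E) (k : ℕ) : Prop :=
  G.ConnectedGraph ∧ ∀ X Y : Set E, G.IsProperSep X Y → k ≤ (G.VSet X ∩ G.VSet Y).ncard

/-- The connected component of the edge `e` in the subgraph induced by `X`. -/
def edgeComponent (G : Multigraph V E) (X : Set E) (e : E) : Set E :=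
  {f | f ∈ X ∧ ∃ x y, x ∈ G.inc e ∧ y ∈ G.inc f ∧ G.ConnectedTo X x y}

/-- The set of connected components (as edge sets) of the subgraph induced by `X`. -/
def components (G : Multigraph V E) (X : Set E) : Set (Set E) :=
  {D | ∃ e ∈ X, D = G.edgeComponent X e}

/-- One step of rerouting a `u`-`v` path: replace a subpath `R` (with endpoints `x,y`)
of `P` by an `x`-`y` path `Q` that is internally disjoint from `P`. -/
def RerouteStep (G : Multigraph V E) (u v : V) (P P' : Set E) : Prop :=
  G.IsPathSet u v P ∧ G.IsPathSet u v P' ∧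
    ∃ x y R Q, G.IsPathSet x y R ∧ G.IsPathSet x y Q ∧ R ⊆ P ∧
      Disjoint Q (P \ R) ∧ G.VSet Q ∩ G.VSet P ⊆ {x, y} ∧ P' = (P \ R) ∪ Q

end Multigraph

/-- A biased graph: a multigraph together with a collection of balanced cycles
satisfying the theta property. -/
structure BiasedGraph (V : Type u) (E : Type v) extends Multigraph V E where
  Balanced : Set E → Prop
  balanced_isCycle : ∀ C, Balanced C → toMultigraph.IsCycleSet C
  theta_property : ∀ x y P₁ P₂ P₃, toMultigraph.IsTheta x y P₁ P₂ P₃ →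
    Balanced (P₁ ∪ P₂) → Balanced (P₂ ∪ P₃) → Balanced (P₁ ∪ P₃)

namespace BiasedGraph

variable {V : Type u} {E : Type v}

/-- A balancing vertex: every unbalanced cycle passes through it. -/
def BalancingVertex (Ω : BiasedGraph V E) (u : V) : Prop :=
  ∀ C, Ω.toMultigraph.IsCycleSet C → ¬ Ω.Balanced C → ∃ e ∈ C, u ∈ Ω.inc e

/-- `C` is an unbalanced cycle of `Ω`. -/
def IsUnbalancedCycle (Ω : BiasedGraph V E) (C : Set E) : Prop :=
  Ω.toMultigraph.IsCycleSet C ∧ ¬ Ω.Balanced C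

/-- Every cycle contained in `X` is balanced. -/
def BalancedSub (Ω : BiasedGraph V E) (X : Set E) : Prop :=
  ∀ C ⊆ X, Ω.toMultigraph.IsCycleSet C → Ω.Balanced C

/-- `e ~ f`: either `e = f` or some balanced cycle contains both. -/
def LinkRel (Ω : BiasedGraph V E) (e f : E) : Prop :=
  e = f ∨ ∃ C, Ω.toMultigraph.IsCycleSet C ∧ Ω.Balanced C ∧ e ∈ C ∧ f ∈ C

/-- The same relation, with the balanced cycle restricted to lie inside `A`. -/
def LinkRelIn (Ω : BiasedGraph V E) (A : Set E) (e f : E) : Prop :=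
  e = f ∨ ∃ C, C ⊆ A ∧ Ω.toMultigraph.IsCycleSet C ∧ Ω.Balanced C ∧ e ∈ C ∧ f ∈ C

/-- `S` is an unbalancing class of `delta u`: a (nonempty) equivalence class of `~`. -/
def IsUnbalancingClass (Ω : BiasedGraph V E) (u : V) (S : Set E) : Prop :=
  S.Nonempty ∧ S ⊆ Ω.toMultigraph.delta u ∧
    ∀ e ∈ S, ∀ f ∈ Ω.toMultigraph.delta u, (f ∈ S ↔ Ω.LinkRel e f)

/-- `delta u` has exactly three unbalancing classes within the edge set `A`. -/
def HasThreeClassesIn (Ω : BiasedGraph V E) (u : V) (A : Set E) : Prop :=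
  ∃ e₁ e₂ e₃, e₁ ∈ Ω.toMultigraph.delta u ∩ A ∧ e₂ ∈ Ω.toMultigraph.delta u ∩ A ∧
    e₃ ∈ Ω.toMultigraph.delta u ∩ A ∧
    ¬ Ω.LinkRelIn A e₁ e₂ ∧ ¬ Ω.LinkRelIn A e₁ e₃ ∧ ¬ Ω.LinkRelIn A e₂ e₃ ∧
    ∀ f ∈ Ω.toMultigraph.delta u ∩ A,
      Ω.LinkRelIn A f e₁ ∨ Ω.LinkRelIn A f e₂ ∨ Ω.LinkRelIn A f e₃

/-- Tight handcuffs: two unbalanced cycles meeting in exactly one vertex. -/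
def IsTightHandcuff (Ω : BiasedGraph V E) (X : Set E) : Prop :=
  ∃ C₁ C₂, Ω.IsUnbalancedCycle C₁ ∧ Ω.IsUnbalancedCycle C₂ ∧ Disjoint C₁ C₂ ∧
    (∃ x, Ω.toMultigraph.VSet C₁ ∩ Ω.toMultigraph.VSet C₂ = {x}) ∧ X = C₁ ∪ C₂

/-- Loose handcuffs: two vertex-disjoint unbalanced cycles joined by a path meeting
each cycle only in an endpoint. -/
def IsLooseHandcuff (Ω : BiasedGraph V E) (X : Set E) : Prop :=
  ∃ C₁ C₂ P x y, Ω.IsUnbalancedCycle C₁ ∧ Ω.IsUnbalancedCycle C₂ ∧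
    Disjoint (Ω.toMultigraph.VSet C₁) (Ω.toMultigraph.VSet C₂) ∧
    Ω.toMultigraph.IsPathSet x y P ∧ Disjoint P (C₁ ∪ C₂) ∧
    Ω.toMultigraph.VSet P ∩ Ω.toMultigraph.VSet C₁ = {x} ∧
    Ω.toMultigraph.VSet P ∩ Ω.toMultigraph.VSet C₂ = {y} ∧ X = C₁ ∪ C₂ ∪ P

/-- A contrabalanced theta: a theta subgraph all three of whose cycles are unbalanced. -/
def IsContraTheta (Ω : BiasedGraph V E) (X : Set E) : Prop :=
  ∃ x y P₁ P₂ P₃, Ω.toMultigraph.IsTheta x y P₁ P₂ P₃ ∧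
    ¬ Ω.Balanced (P₁ ∪ P₂) ∧ ¬ Ω.Balanced (P₂ ∪ P₃) ∧ ¬ Ω.Balanced (P₁ ∪ P₃) ∧
    X = P₁ ∪ P₂ ∪ P₃

/-- The circuits of the frame matroid of a biased graph. -/
def FrameCircuit (Ω : BiasedGraph V E) (X : Set E) : Prop :=
  (Ω.toMultigraph.IsCycleSet X ∧ Ω.Balanced X) ∨ Ω.IsTightHandcuff X ∨
    Ω.IsLooseHandcuff X ∨ Ω.IsContraTheta X

/-- The number of balanced components of the subgraph induced by `X`. -/
noncomputable def numBalComponents (Ω : BiasedGraph V E) (X : Set E) : ℕ :=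
  {D | D ∈ Ω.toMultigraph.components X ∧ Ω.BalancedSub D}.ncard

end BiasedGraph

section MatroidDefs

variable {α : Type*}

/-- A circuit of a matroid: a minimal dependent set. -/
def MCircuit (M : Matroid α) (C : Set α) : Prop :=
  C ⊆ M.E ∧ ¬ M.Indep C ∧ ∀ D ⊂ C, M.Indep D

/-- A hyperplane: a maximal proper flat. -/
def MHyperplane (M : Matroid α) (H : Set α) : Prop :=
  M.IsFlat H ∧ H ≠ M.E ∧ ∀ F, M.IsFlat F → H ⊆ F → F = H ∨ F = M.E

/-- A cocircuit: a circuit of the dual matroid. -/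
def MCocircuit (M : Matroid α) (K : Set α) : Prop := MCircuit (Matroid.dual M) K

open scoped Matroid in
/-- Deletion of a set of elements. -/
def MDelete (M : Matroid α) (D : Set α) : Matroid α := M ↾ (M.E \ D)

/-- Contraction of a set of elements. -/
def MContract (M : Matroid α) (C : Set α) : Matroid α :=
  Matroid.dual (MDelete (Matroid.dual M) C)

/-- `N` is a minor of `M`. -/
def IsMinorOf (N M : Matroid α) : Prop := ∃ C D, N = MDelete (MContract M C) D

/-- The rank of a set in a matroid (junk value if unbounded). -/
noncomputable def mRank (M : Matroid α) (X : Set α) : ℕ :=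
  sSup {n : ℕ | ∃ I, M.Indep I ∧ I ⊆ X ∧ I.ncard = n}

/-- A matroid is connected if any two elements lie on a common circuit. -/
def MatroidConnected (M : Matroid α) : Prop :=
  M.E.Nonempty ∧ ∀ e ∈ M.E, ∀ f ∈ M.E, e = f ∨ ∃ C, MCircuit M C ∧ e ∈ C ∧ f ∈ C

/-- A `k`-separation of a matroid. -/
def MatroidKSeparation (M : Matroid α) (X Y : Set α) (k : ℕ) : Prop :=
  X ∪ Y = M.E ∧ Disjoint X Y ∧ k ≤ X.ncard ∧ k ≤ Y.ncard ∧
    mRank M X + mRank M Y + 1 = mRank M M.E + k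

/-- A matroid is 3-connected if it has no `k`-separation for `k < 3`. -/
def Matroid3Connected (M : Matroid α) : Prop :=
  ∀ X Y (k : ℕ), k ≤ 2 → ¬ MatroidKSeparation M X Y k

/-- A matroid is graphic if its circuits are exactly the cycles of some multigraph. -/
def IsGraphic (M : Matroid α) : Prop :=
  ∃ (W : Type) (G : Multigraph W α), ∀ C, MCircuit M C ↔ G.IsCycleSet C

/-- A matroid has a `U_{2,4}` minor. -/
def HasU24Minor (M : Matroid α) : Prop :=
  ∃ N : Matroid α, IsMinorOf N M ∧ N.E.ncard = 4 ∧
    ∀ C, MCircuit N C ↔ C ⊆ N.E ∧ C.ncard = 3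

end MatroidDefs

/-- `M` is the frame matroid of the biased graph `Ω` (on ground set all of `E`). -/
def IsFrameMatroidOf {V E : Type*} (M : Matroid E) (Ω : BiasedGraph V E) : Prop :=
  M.E = Set.univ ∧ ∀ C, MCircuit M C ↔ Ω.FrameCircuit C

open scoped Matroid in
/-- A vertex is committed: the complement of its edge star is a connected
nongraphic hyperplane of the frame matroid. -/
def BiasedGraph.IsCommitted {V E : Type*} (Ω : BiasedGraph V E) (M : Matroid E) (x : V) : Prop :=
  MHyperplane M (Ω.toMultigraph.deltaPlus x)ᶜ ∧
    MatroidConnected (M ↾ (Ω.toMultigraph.deltaPlus x)ᶜ) ∧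
    ¬ IsGraphic (M ↾ (Ω.toMultigraph.deltaPlus x)ᶜ)

/-- `Ω'` is a roll-up of `Ω` at the balancing vertex `u`: some (possibly empty)
unbalancing class of links at `u` is replaced by unbalanced loops at their other endpoints. -/
def BiasedGraph.IsRollUpOf {V E : Type*} (Ω' Ω : BiasedGraph V E) (u : V) : Prop :=
  ∃ S : Set E, (S = ∅ ∨ Ω.IsUnbalancingClass u S) ∧
    (∀ e ∉ S, Ω'.inc e = Ω.inc e) ∧
    (∀ e ∈ S, ∃ w, w ≠ u ∧ Ω.inc e = s(u, w) ∧ Ω'.inc e = s(w, w)) ∧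
    (∀ C, Ω'.Balanced C ↔ (Ω.Balanced C ∧ C ∩ S = ∅))



/-! ### Auxiliary infrastructure for stmt4 -/

theorem list_nodup_append_disj {α : Type*} {l₁ l₂ : List α} :
    (l₁ ++ l₂).Nodup ↔ l₁.Nodup ∧ l₂.Nodup ∧ l₁.Disjoint l₂ := by
  rw [List.nodup_append]
  constructor
  · rintro ⟨h1, h2, h3⟩
    exact ⟨h1, h2, fun a ha hb => h3 a ha a hb rfl⟩
  · rintro ⟨h1, h2, h3⟩
    exact ⟨h1, h2, fun a ha b hb hab => h3 ha (hab ▸ hb)⟩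

namespace Multigraph

namespace Walk

variable {V : Type u} {E : Type v} {G : Multigraph V E}

@[simp] theorem edgeList_nil (a : V) : (Walk.nil (G := G) a).edgeList = [] := rfl

@[simp] theorem edgeList_cons {x y z : V} (e : E) (h : G.inc e = s(x, y)) (t : G.Walk y z) :
    (Walk.cons e h t).edgeList = e :: t.edgeList := rfl

@[simp] theorem vertList_nil (a : V) : (Walk.nil (G := G) a).vertList = [a] := rfl

@[simp] theorem vertList_cons {x y z : V} (e : E) (h : G.inc e = s(x, y)) (t : G.Walk y z) :
    (Walk.cons e h t).vertList = x :: t.vertList := rfl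

theorem vertList_ne_nil {x y : V} (w : G.Walk x y) : w.vertList ≠ [] := by
  cases w <;> simp

theorem start_mem_vertList {x y : V} (w : G.Walk x y) : x ∈ w.vertList := by
  cases w <;> simp

theorem exists_concat_vertList {x y : V} (w : G.Walk x y) :
    ∃ l, w.vertList = l ++ [y] := by
  induction w with
  | nil a => exact ⟨[], rfl⟩
  | @cons x y z e h t ih =>
    obtain ⟨l, hl⟩ := ih
    exact ⟨x :: l, by simp [hl]⟩

theorem end_mem_vertList {x y : V} (w : G.Walk x y) : y ∈ w.vertList := by
  obtain ⟨l, hl⟩ := w.exists_concat_vertList; simp [hl]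

theorem mem_vertList_of_mem_inc {x y : V} (w : G.Walk x y) {e : E} {v : V} :
    e ∈ w.edgeList → v ∈ G.inc e → v ∈ w.vertList := by
  induction w with
  | nil a => simp
  | cons f h t ih =>
    intro he hv
    simp only [edgeList_cons, List.mem_cons] at he
    rcases he with rfl | he
    · rw [h, Sym2.mem_iff] at hv
      rcases hv with rfl | rfl
      · simp
      · exact List.mem_cons_of_mem _ t.start_mem_vertList
    · exact List.mem_cons_of_mem _ (ih he hv)

theorem exists_mem_inc_of_mem_vertList {x y : V} (w : G.Walk x y) {v : V} :
    w.edgeList ≠ [] → v ∈ w.vertList → ∃ e ∈ w.edgeList, v ∈ G.inc e := by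
  induction w with
  | nil a => simp
  | cons f h t ih =>
    intro _ hv
    simp only [vertList_cons, List.mem_cons] at hv
    rcases hv with rfl | hv
    · exact ⟨f, by simp, by rw [h]; simp⟩
    · cases t with
      | nil b =>
        simp only [vertList_nil, List.mem_singleton] at hv
        subst hv
        exact ⟨f, by simp, by rw [h]; simp⟩
      | cons g hg t' =>
        obtain ⟨e, he, hve⟩ := ih (by simp) hv
        exact ⟨e, List.mem_cons_of_mem _ he, hve⟩

theorem eq_of_edgeList_nil {x y : V} (w : G.Walk x y) (h : w.edgeList = []) : x = y := by
  cases w with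
  | nil => rfl
  | cons e h' t => simp at h

/-- Concatenation of walks. -/
def append : {x y z : V} → G.Walk x y → G.Walk y z → G.Walk x z
  | _, _, _, .nil _, w => w
  | _, _, _, .cons e h t, w => .cons e h (t.append w)

@[simp] theorem append_nil_left {x z : V} (w : G.Walk x z) :
    (Walk.nil x).append w = w := rfl

@[simp] theorem append_cons {x y y' z : V} (e : E) (h : G.inc e = s(x, y)) (t : G.Walk y y')
    (w : G.Walk y' z) : (Walk.cons e h t).append w = Walk.cons e h (t.append w) := rfl

theorem edgeList_append {x y z : V} (u : G.Walk x y) (v : G.Walk y z) :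
    (u.append v).edgeList = u.edgeList ++ v.edgeList := by
  induction u with
  | nil a => simp
  | cons e h t ih => simp [ih]

theorem dropLast_cons_of_ne_nil {α : Type*} (a : α) {l : List α} (h : l ≠ []) :
    (a :: l).dropLast = a :: l.dropLast := by
  cases l with
  | nil => exact absurd rfl h
  | cons b l' => rfl

theorem vertList_append {x y z : V} (u : G.Walk x y) (v : G.Walk y z) :
    (u.append v).vertList = u.vertList.dropLast ++ v.vertList := by
  induction u with
  | nil a => simp
  | cons e h t ih =>
    simp only [append_cons, vertList_cons, ih]
    rw [dropLast_cons_of_ne_nil _ t.vertList_ne_nil]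
    simp

/-- Reversal of a walk. -/
def reverse : {x y : V} → G.Walk x y → G.Walk y x
  | _, _, .nil a => .nil a
  | _, _, .cons e h t => t.reverse.append (.cons e (by rw [h, Sym2.eq_swap]) (.nil _))

theorem edgeList_reverse {x y : V} (w : G.Walk x y) :
    w.reverse.edgeList = w.edgeList.reverse := by
  induction w with
  | nil a => rfl
  | cons e h t ih => simp [reverse, edgeList_append, ih]

theorem vertList_eq_cons {x y : V} (w : G.Walk x y) : ∃ l, w.vertList = x :: l := by
  cases w <;> simp

theorem vertList_reverse {x y : V} (w : G.Walk x y) :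
    w.reverse.vertList = w.vertList.reverse := by
  induction w with
  | nil a => rfl
  | cons e h t ih =>
    obtain ⟨l, hl⟩ := t.vertList_eq_cons
    simp only [reverse, vertList_append, ih, vertList_cons, hl]
    simp

end Walk

end Multigraph

namespace Multigraph

namespace Walk

variable {V : Type u} {E : Type v} {G : Multigraph V E}

theorem IsPath.edgeList_nodup {x y : V} {w : G.Walk x y} (h : w.IsPath) :
    w.edgeList.Nodup := by
  induction w with
  | nil a => simp
  | @cons x y z f hf t ih =>
    have h' : x ∉ t.vertList ∧ t.vertList.Nodup := by
      simpa [IsPath] using h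
    refine List.nodup_cons.2 ⟨fun hmem => ?_, ih h'.2⟩
    exact h'.1 (t.mem_vertList_of_mem_inc hmem (by rw [hf]; simp))

theorem IsPath.reverse {x y : V} {w : G.Walk x y} (h : w.IsPath) : w.reverse.IsPath := by
  unfold IsPath at *
  rw [vertList_reverse]
  exact List.nodup_reverse.2 h

theorem edgeList_eq_nil_of_isPath_self {x : V} (w : G.Walk x x) (h : w.IsPath) :
    w.edgeList = [] := by
  cases w with
  | nil => rfl
  | cons f hf t =>
    exfalso
    have h' := List.nodup_cons.1 (by simpa [IsPath] using h)
    exact h'.1 t.end_mem_vertList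

theorem edgeList_ne_nil_of_ne {x y : V} (w : G.Walk x y) (h : x ≠ y) : w.edgeList ≠ [] :=
  fun hn => h (w.eq_of_edgeList_nil hn)

/-- Split a walk at a vertex. -/
theorem split_at_vertex {x y : V} (w : G.Walk x y) {v : V} (hv : v ∈ w.vertList) :
    ∃ (w₁ : G.Walk x v) (w₂ : G.Walk v y),
      w.edgeList = w₁.edgeList ++ w₂.edgeList ∧
      w.vertList = w₁.vertList.dropLast ++ w₂.vertList := by
  induction w with
  | nil a =>
    have hva : v = a := by simpa using hv
    subst hva
    exact ⟨.nil _, .nil _, by simp, by simp⟩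
  | @cons x z y' f hf t ih =>
    by_cases hvx : v = x
    · subst hvx
      exact ⟨.nil v, .cons f hf t, by simp⟩
    · have hv' : v ∈ t.vertList := by
        rcases (by simpa using hv : v = x ∨ v ∈ t.vertList) with h1 | h1
        · exact absurd h1 hvx
        · exact h1
      obtain ⟨t₁, t₂, he, hve⟩ := ih hv'
      refine ⟨.cons f hf t₁, t₂, by simp [he], ?_⟩
      simp only [vertList_cons, hve]
      rw [dropLast_cons_of_ne_nil _ t₁.vertList_ne_nil]
      simp

/-- Split a walk at an edge. -/
theorem split_at_edge {x y : V} (w : G.Walk x y) {e : E} (he : e ∈ w.edgeList) :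
    ∃ (a b : V) (h : G.inc e = s(a, b)) (w₁ : G.Walk x a) (w₂ : G.Walk b y),
      w.edgeList = w₁.edgeList ++ e :: w₂.edgeList ∧
      w.vertList = w₁.vertList ++ w₂.vertList := by
  induction w with
  | nil a => simp at he
  | @cons x z y' f hf t ih =>
    by_cases hef : e = f
    · subst hef
      exact ⟨x, z, hf, .nil x, t, by simp, by simp⟩
    · have he' : e ∈ t.edgeList := by
        rcases (by simpa using he : e = f ∨ e ∈ t.edgeList) with h1 | h1
        · exact absurd h1 hef
        · exact h1
      obtain ⟨a, b, h, t₁, t₂, hel, hvl⟩ := ih he'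
      exact ⟨a, b, h, .cons f hf t₁, t₂, by simp [hel], by simp [hvl]⟩

end Walk

end Multigraph

namespace Multigraph

variable {V : Type u} {E : Type v} {G : Multigraph V E}

theorem Walk.mem_edgeSet {x y : V} (w : G.Walk x y) {e : E} :
    e ∈ w.edgeSet ↔ e ∈ w.edgeList := Iff.rfl

theorem Walk.edgeSet_finite {x y : V} (w : G.Walk x y) : w.edgeSet.Finite :=
  Set.Finite.subset w.edgeList.finite_toSet fun _ he => he

theorem IsPathSet.finite {x y : V} {P : Set E} (h : G.IsPathSet x y P) : P.Finite := by
  obtain ⟨w, _, rfl⟩ := h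
  exact w.edgeSet_finite

theorem IsCycleSet.finite {C : Set E} (h : G.IsCycleSet C) : C.Finite := by
  obtain ⟨x, w, _, rfl⟩ := h
  exact w.edgeSet_finite

theorem IsCycleSet.nonempty {C : Set E} (h : G.IsCycleSet C) : C.Nonempty := by
  obtain ⟨x, w, hw, rfl⟩ := h
  obtain ⟨e, he⟩ := List.exists_mem_of_ne_nil _ hw.1
  exact ⟨e, he⟩

theorem IsPathSet.reverse {x y : V} {P : Set E} (h : G.IsPathSet x y P) :
    G.IsPathSet y x P := by
  obtain ⟨w, hw, rfl⟩ := h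
  refine ⟨w.reverse, hw.reverse, ?_⟩
  ext e
  simp [Walk.edgeSet, Walk.edgeList_reverse]

theorem vset_eq_vertList {x y : V} (w : G.Walk x y) (hne : w.edgeList ≠ []) :
    G.VSet w.edgeSet = {v | v ∈ w.vertList} := by
  ext v
  constructor
  · rintro ⟨e, he, hv⟩
    exact w.mem_vertList_of_mem_inc he hv
  · intro hv
    exact w.exists_mem_inc_of_mem_vertList hne hv

theorem IsCycleSet.exists_pathSet_erase {C : Set E} (hC : G.IsCycleSet C) {e : E} (he : e ∈ C) :
    ∃ a b, G.inc e = s(a, b) ∧ G.IsPathSet b a (C \ {e}) := by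
  obtain ⟨x, w, hw, rfl⟩ := hC
  obtain ⟨hne, hnodE, hnodV⟩ := hw
  obtain ⟨a, b, h, w₁, w₂, hel, hvl⟩ := w.split_at_edge (he : e ∈ w.edgeList)
  have he12 : e ∉ w₁.edgeList ∧ e ∉ w₂.edgeList := by
    rw [hel] at hnodE
    rw [list_nodup_append_disj] at hnodE
    obtain ⟨h1, h2, h3⟩ := hnodE
    exact ⟨fun hmem => h3 hmem (by simp), (List.nodup_cons.1 h2).1⟩
  refine ⟨a, b, h, w₂.append w₁, ?_, ?_⟩
  · unfold Walk.IsPath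
    rw [Walk.vertList_append]
    rw [hvl] at hnodV
    rw [List.dropLast_append_of_ne_nil w₂.vertList_ne_nil] at hnodV
    rw [List.nodup_append_comm] at hnodV
    exact hnodV
  · ext f
    simp only [Walk.mem_edgeSet, Walk.edgeSet, Walk.edgeList_append, List.mem_append,
      Set.mem_diff, Set.mem_setOf_eq, Set.mem_singleton_iff, hel, List.mem_cons]
    constructor
    · rintro (hf | hf)
      · exact ⟨Or.inr (Or.inr hf), fun hfe => he12.2 (hfe ▸ hf)⟩
      · exact ⟨Or.inl hf, fun hfe => he12.1 (hfe ▸ hf)⟩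
    · rintro ⟨(hf | hf | hf), hfe⟩
      · exact Or.inr hf
      · exact absurd hf hfe
      · exact Or.inl hf

theorem IsCycleSet.eq_singleton_of_diag {C : Set E} (hC : G.IsCycleSet C) {e : E} (he : e ∈ C)
    {a : V} (h : G.inc e = s(a, a)) : C = {e} := by
  obtain ⟨a', b', h', hp⟩ := hC.exists_pathSet_erase he
  rw [h] at h'
  obtain ⟨ha, hb⟩ : a = a' ∧ a = b' := by
    rcases Sym2.eq_iff.1 h' with ⟨h1, h2⟩ | ⟨h1, h2⟩
    · exact ⟨h1, h2⟩
    · exact ⟨h2, h1⟩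
  subst ha
  obtain ⟨w, hw, hws⟩ := hb ▸ hp
  have hnil := w.edgeList_eq_nil_of_isPath_self hw
  have hempty : C \ {e} = ∅ := by
    rw [← hws]
    ext f
    simp [Walk.edgeSet, hnil]
  ext f
  constructor
  · intro hf
    by_contra hfe
    have : f ∈ C \ {e} := ⟨hf, hfe⟩
    rw [hempty] at this
    exact this
  · rintro rfl
    exact he

theorem IsPathSet.eq_of_subset {x y : V} {P Q : Set E} (hP : G.IsPathSet x y P)
    (hQ : G.IsPathSet x y Q) (hQP : Q ⊆ P) : Q = P := by
  have key : ∀ {x y : V} (q : G.Walk x y), q.IsPath → ∀ (p : G.Walk x y), p.IsPath →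
      (∀ e ∈ q.edgeList, e ∈ p.edgeList) → ∀ e ∈ p.edgeList, e ∈ q.edgeList := by
    intro x y q
    induction q with
    | nil a =>
      intro _ p hp _ e he
      rw [p.edgeList_eq_nil_of_isPath_self hp] at he
      simp at he
    | @cons x z y f hf t ih =>
      intro hq p hp hsub e he
      cases p with
      | nil =>
        have := (Walk.cons f hf t).edgeList_eq_nil_of_isPath_self hq
        simp at this
      | @cons _ w _ g hg p' =>
        have hqn : x ∉ t.vertList ∧ t.vertList.Nodup :=
          List.nodup_cons.1 (hq : (x :: t.vertList).Nodup)
        have hpn : x ∉ p'.vertList ∧ p'.vertList.Nodup :=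
          List.nodup_cons.1 (hp : (x :: p'.vertList).Nodup)
        have hfp : f ∈ (Walk.cons g hg p').edgeList := hsub f (by simp)
        have hfg : f = g := by
          rcases (by simpa using hfp : f = g ∨ f ∈ p'.edgeList) with h1 | h1
          · exact h1
          · exact absurd (p'.mem_vertList_of_mem_inc h1 (by rw [hf]; simp)) hpn.1
        subst hfg
        have hz : z = w := by
          rcases Sym2.eq_iff.1 (hf.symm.trans hg) with ⟨_, h2⟩ | ⟨h1, h2⟩
          · exact h2
          · exact absurd (h2 ▸ t.start_mem_vertList) hqn.1
        subst hz
        have hsub' : ∀ e' ∈ t.edgeList, e' ∈ p'.edgeList := by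
          intro e' he'
          have hfn : f ∉ t.edgeList := (List.nodup_cons.1 hq.edgeList_nodup).1
          rcases (by simpa using hsub e' (by simp [he']) : e' = f ∨ e' ∈ p'.edgeList) with
            rfl | h1
          · exact absurd he' hfn
          · exact h1
        rcases (by simpa using he : e = f ∨ e ∈ p'.edgeList) with rfl | he'
        · simp
        · have := ih hqn.2 p' hpn.2 hsub' e he'
          simp [this]
  obtain ⟨p, hp, rfl⟩ := hP
  obtain ⟨q, hq, rfl⟩ := hQ
  ext f
  exact ⟨fun hf => hQP hf, fun hf => key q hq p hp (fun e hee => hQP hee) f hf⟩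

theorem cycleSet_of_two_paths {x y : V} {P Q : Set E} (hxy : x ≠ y)
    (hP : G.IsPathSet x y P) (hQ : G.IsPathSet x y Q) (hd : Disjoint P Q)
    (hV : G.VSet P ∩ G.VSet Q ⊆ {x, y}) : G.IsCycleSet (P ∪ Q) := by
  obtain ⟨p, hp, rfl⟩ := hP
  obtain ⟨q, hq, rfl⟩ := hQ
  have hpne := p.edgeList_ne_nil_of_ne hxy
  have hqne := q.edgeList_ne_nil_of_ne hxy
  refine ⟨x, p.append q.reverse, ⟨?_, ?_, ?_⟩, ?_⟩
  · rw [Walk.edgeList_append]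
    simp [hpne]
  · rw [Walk.edgeList_append, Walk.edgeList_reverse, list_nodup_append_disj]
    refine ⟨hp.edgeList_nodup, List.nodup_reverse.2 hq.edgeList_nodup, ?_⟩
    intro e hep heq
    exact (Set.disjoint_left.1 hd) hep (show e ∈ q.edgeList by simpa using heq)
  · rw [Walk.vertList_append, Walk.vertList_reverse]
    obtain ⟨lp, hlp⟩ := p.exists_concat_vertList
    obtain ⟨m, hm⟩ := q.vertList_eq_cons
    rw [hlp, hm, List.dropLast_concat]
    have hrev : (x :: m).reverse = m.reverse ++ [x] := by simp
    rw [hrev]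
    have h1 : (lp ++ (m.reverse ++ [x])).dropLast = lp ++ m.reverse := by
      rw [List.dropLast_append_of_ne_nil (l' := lp) (l := m.reverse ++ [x]) (by simp), List.dropLast_concat]
    rw [h1, list_nodup_append_disj]
    have hpn : lp.Nodup ∧ y ∉ lp := by
      have : (lp ++ [y]).Nodup := by rw [← hlp]; exact hp
      rw [list_nodup_append_disj] at this
      exact ⟨this.1, fun hy => this.2.2 hy (by simp)⟩
    have hqn : x ∉ m ∧ m.Nodup := List.nodup_cons.1 (by rw [← hm]; exact hq)
    refine ⟨hpn.1, List.nodup_reverse.2 hqn.2, ?_⟩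
    intro v hvl hvm
    have hvp : v ∈ {v | v ∈ p.vertList} := by rw [hlp]; simp [hvl]
    have hvq : v ∈ {v | v ∈ q.vertList} := by rw [hm]; simp [List.mem_reverse.1 hvm]
    rw [← vset_eq_vertList p hpne] at hvp
    rw [← vset_eq_vertList q hqne] at hvq
    rcases hV ⟨hvp, hvq⟩ with rfl | rfl
    · exact hqn.1 (List.mem_reverse.1 hvm)
    · exact hpn.2 hvl
  · ext f
    simp [Walk.edgeSet, Walk.edgeList_append, Walk.edgeList_reverse, Set.mem_union]

end Multigraph

namespace Multigraph

variable {V : Type u} {E : Type v} {G : Multigraph V E}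

theorem split_two {a b : V} (p : G.Walk a b) {x y : V}
    (hx : x ∈ p.vertList) (hy : y ∈ p.vertList) :
    ∃ (u v : V), ((u = x ∧ v = y) ∨ (u = y ∧ v = x)) ∧
      ∃ (p₁ : G.Walk a u) (r : G.Walk u v) (p₂ : G.Walk v b),
        p.edgeList = p₁.edgeList ++ r.edgeList ++ p₂.edgeList ∧
        p.vertList = p₁.vertList.dropLast ++ r.vertList.dropLast ++ p₂.vertList := by
  obtain ⟨p₁', p₂', hel, hvl⟩ := p.split_at_vertex hx
  by_cases hy2 : y ∈ p₂'.vertList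
  · obtain ⟨r, p₂, hel2, hvl2⟩ := p₂'.split_at_vertex hy2
    refine ⟨x, y, Or.inl ⟨rfl, rfl⟩, p₁', r, p₂, ?_, ?_⟩
    · rw [hel, hel2, List.append_assoc]
    · rw [hvl, hvl2, List.append_assoc]
  · have hy1 : y ∈ p₁'.vertList.dropLast := by
      rw [hvl] at hy
      rcases List.mem_append.1 hy with h1 | h1
      · exact h1
      · exact absurd h1 hy2
    obtain ⟨p₁, r, hel2, hvl2⟩ := p₁'.split_at_vertex ((List.dropLast_sublist _).subset hy1)
    refine ⟨y, x, Or.inr ⟨rfl, rfl⟩, p₁, r, p₂', ?_, ?_⟩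
    · rw [hel, hel2]
    · rw [hvl, hvl2, List.dropLast_append_of_ne_nil r.vertList_ne_nil]

theorem excursion_inner {a b : V} (p : G.Walk a b) :
    ∀ {c : V} (q : G.Walk c b), q.IsPath → c ∉ p.vertList →
      ∃ (y' : V) (w' : G.Walk c y'), w'.IsPath ∧ y' ∈ p.vertList ∧ w'.edgeList ≠ [] ∧
        (∀ e ∈ w'.edgeList, e ∈ q.edgeList) ∧ (∀ e ∈ w'.edgeList, e ∉ p.edgeList) ∧
        (∀ v ∈ w'.vertList, v ∈ q.vertList) ∧ (∀ v ∈ w'.vertList, v ∈ p.vertList → v = y') := by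
  intro c q
  induction q with
  | nil _ => exact fun _ hc => absurd p.end_mem_vertList hc
  | @cons c d b f hf t ih =>
    intro hq hc
    have hq' := List.nodup_cons.1 (hq : (c :: t.vertList).Nodup)
    have hfp : f ∉ p.edgeList := fun hmem =>
      hc (p.mem_vertList_of_mem_inc hmem (by rw [hf]; simp))
    by_cases hd : d ∈ p.vertList
    · refine ⟨d, .cons f hf (.nil d), ?_, hd, by simp, ?_, ?_, ?_, ?_⟩
      · have hcd : c ≠ d := fun h => hc (h ▸ hd)
        simp [Walk.IsPath, hcd]
      · intro e he
        simp only [Walk.edgeList_cons, Walk.edgeList_nil, List.mem_singleton] at he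
        simp [he]
      · intro e he
        simp only [Walk.edgeList_cons, Walk.edgeList_nil, List.mem_singleton] at he
        exact he ▸ hfp
      · intro v hv
        rcases (by simpa using hv : v = c ∨ v = d) with rfl | rfl
        · simp
        · exact List.mem_cons_of_mem _ t.start_mem_vertList
      · intro v hv hvp
        rcases (by simpa using hv : v = c ∨ v = d) with rfl | rfl
        · exact absurd hvp hc
        · rfl
    · obtain ⟨y', w'', hw''p, hy', hne, hsubq, hnotp, hvq, hvcond⟩ := ih p hq'.2 hd
      have hcw : c ∉ w''.vertList := fun hmem => hq'.1 (hvq c hmem)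
      refine ⟨y', .cons f hf w'', List.nodup_cons.2 ⟨hcw, hw''p⟩, hy', by simp, ?_, ?_, ?_, ?_⟩
      · intro e he
        rcases (by simpa using he : e = f ∨ e ∈ w''.edgeList) with rfl | h1
        · simp
        · exact List.mem_cons_of_mem _ (hsubq e h1)
      · intro e he
        rcases (by simpa using he : e = f ∨ e ∈ w''.edgeList) with rfl | h1
        · exact hfp
        · exact hnotp e h1
      · intro v hv
        rcases (by simpa using hv : v = c ∨ v ∈ w''.vertList) with rfl | h1
        · simp
        · exact List.mem_cons_of_mem _ (hvq v h1)
      · intro v hv hvp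
        rcases (by simpa using hv : v = c ∨ v ∈ w''.vertList) with rfl | h1
        · exact absurd hvp hc
        · exact hvcond v h1 hvp

theorem excursion {a b : V} (p : G.Walk a b) :
    ∀ {c : V} (q : G.Walk c b), q.IsPath → c ∈ p.vertList →
      (∃ f ∈ q.edgeList, f ∉ p.edgeList) →
      ∃ (x y : V) (w' : G.Walk x y), x ≠ y ∧ x ∈ p.vertList ∧ y ∈ p.vertList ∧ w'.IsPath ∧
        w'.edgeList ≠ [] ∧ (∀ e ∈ w'.edgeList, e ∈ q.edgeList) ∧
        (∀ e ∈ w'.edgeList, e ∉ p.edgeList) ∧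
        (∀ v ∈ w'.vertList, v ∈ p.vertList → v = x ∨ v = y) := by
  intro c q
  induction q with
  | nil _ =>
    rintro _ _ ⟨f, hf, _⟩
    simp at hf
  | @cons c d b f hf t ih =>
    intro hq hc hex
    have hq' := List.nodup_cons.1 (hq : (c :: t.vertList).Nodup)
    by_cases hfp : f ∈ p.edgeList
    · have hd : d ∈ p.vertList := p.mem_vertList_of_mem_inc hfp (by rw [hf]; simp)
      have hex' : ∃ f' ∈ t.edgeList, f' ∉ p.edgeList := by
        obtain ⟨f', hf1, hf2⟩ := hex
        rcases (by simpa using hf1 : f' = f ∨ f' ∈ t.edgeList) with rfl | h1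
        · exact absurd hfp hf2
        · exact ⟨f', h1, hf2⟩
      obtain ⟨x, y, w', hxy, hxp, hyp, hwp, hwne, hsubq, hnotp, hvcond⟩ := ih p hq'.2 hd hex'
      exact ⟨x, y, w', hxy, hxp, hyp, hwp, hwne,
        fun e he => List.mem_cons_of_mem _ (hsubq e he), hnotp, hvcond⟩
    · by_cases hd : d ∈ p.vertList
      · have hcd : c ≠ d := fun h => hq'.1 (h ▸ t.start_mem_vertList)
        refine ⟨c, d, .cons f hf (.nil d), hcd, hc, hd, by simp [Walk.IsPath, hcd], by simp,
          ?_, ?_, ?_⟩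
        · intro e he
          simp only [Walk.edgeList_cons, Walk.edgeList_nil, List.mem_singleton] at he
          simp [he]
        · intro e he
          simp only [Walk.edgeList_cons, Walk.edgeList_nil, List.mem_singleton] at he
          exact he ▸ hfp
        · intro v hv _
          rcases (by simpa using hv : v = c ∨ v = d) with rfl | rfl
          · exact Or.inl rfl
          · exact Or.inr rfl
      · obtain ⟨y', w'', hw''p, hy', hne, hsubq, hnotp, hvq, hvcond⟩ :=
          excursion_inner p t hq'.2 hd
        have hcw : c ∉ w''.vertList := fun hmem => hq'.1 (hvq c hmem)
        have hcy : c ≠ y' := fun h => hcw (h ▸ w''.end_mem_vertList)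
        refine ⟨c, y', .cons f hf w'', hcy, hc, hy',
          List.nodup_cons.2 ⟨hcw, hw''p⟩, by simp, ?_, ?_, ?_⟩
        · intro e he
          rcases (by simpa using he : e = f ∨ e ∈ w''.edgeList) with rfl | h1
          · simp
          · exact List.mem_cons_of_mem _ (hsubq e h1)
        · intro e he
          rcases (by simpa using he : e = f ∨ e ∈ w''.edgeList) with rfl | h1
          · exact hfp
          · exact hnotp e h1
        · intro v hv hvp
          rcases (by simpa using hv : v = c ∨ v ∈ w''.vertList) with rfl | h1
          · exact Or.inl rfl
          · exact Or.inr (hvcond v h1 hvp)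

end Multigraph

namespace Multigraph

variable {V : Type u} {E : Type v} {G : Multigraph V E}

theorem IsTheta.rotate {x y : V} {P₁ P₂ P₃ : Set E} (h : G.IsTheta x y P₁ P₂ P₃) :
    G.IsTheta x y P₂ P₃ P₁ := by
  obtain ⟨hxy, h1, h2, h3, d12, d23, d13, v12, v23, v13⟩ := h
  exact ⟨hxy, h2, h3, h1, d23, d13.symm, d12.symm, v23,
    by rw [Set.inter_comm]; exact v13, by rw [Set.inter_comm]; exact v12⟩

end Multigraph

namespace BiasedGraph

variable {V : Type u} {E : Type v}

theorem theta_parity (Ω : BiasedGraph V E) (hnt : ¬ ∃ X, Ω.IsContraTheta X)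
    {x y : V} {A B C : Set E} (ht : Ω.toMultigraph.IsTheta x y A B C) :
    (Ω.Balanced (A ∪ C) ↔ (Ω.Balanced (B ∪ C) ↔ Ω.Balanced (A ∪ B))) := by
  have t1 := Ω.theta_property x y A B C ht
  have t2 := Ω.theta_property x y B C A ht.rotate
  have t3 := Ω.theta_property x y C A B ht.rotate.rotate
  have hnc : ¬(¬ Ω.Balanced (A ∪ B) ∧ ¬ Ω.Balanced (B ∪ C) ∧ ¬ Ω.Balanced (A ∪ C)) := by
    rintro ⟨h1, h2, h3⟩
    exact hnt ⟨A ∪ B ∪ C, x, y, A, B, C, ht, h1, h2, h3, rfl⟩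
  rw [Set.union_comm C A, Set.union_comm B A] at t2
  rw [Set.union_comm C A, Set.union_comm C B] at t3
  tauto

set_option maxHeartbeats 1000000 in
theorem key_step (Ω : BiasedGraph V E)
    (hnt : ¬ ∃ X, Ω.IsContraTheta X) {a b : V} {e : E}
    (hinc : Ω.inc e = s(a, b)) {P Q : Set E}
    (hP : Ω.toMultigraph.IsPathSet b a P) (hQ : Ω.toMultigraph.IsPathSet b a Q)
    (heP : e ∉ P) (heQ : e ∉ Q) (hsub : ¬ Q ⊆ P) :
    ∃ R Q' : Set E, R ⊆ P ∧ Q' ⊆ Q ∧ Disjoint Q' P ∧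
      Ω.toMultigraph.IsCycleSet (R ∪ Q') ∧
      Ω.toMultigraph.IsCycleSet (((P \ R) ∪ Q') ∪ {e}) ∧
      (Ω.Balanced (P ∪ {e}) ↔
        (Ω.Balanced (((P \ R) ∪ Q') ∪ {e}) ↔ Ω.Balanced (R ∪ Q'))) := by
  obtain ⟨p, hp, hps⟩ := hP
  obtain ⟨q, hq, hqs⟩ := hQ
  have hex : ∃ f ∈ q.edgeList, f ∉ p.edgeList := by
    rcases Set.not_subset.1 hsub with ⟨f, hfQ, hfP⟩
    rw [← hqs] at hfQ
    rw [← hps] at hfP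
    exact ⟨f, hfQ, hfP⟩
  obtain ⟨x, y, w', hxy, hxp, hyp, hw'p, hw'ne, hsubq, hnotp, hvcond⟩ :=
    Multigraph.excursion p q hq p.start_mem_vertList hex
  obtain ⟨u, v, hcase, p₁, r, p₂, hel, hvl⟩ := Multigraph.split_two p hxp hyp
  have huv : u ≠ v := by
    rcases hcase with ⟨rfl, rfl⟩ | ⟨rfl, rfl⟩
    · exact hxy
    · exact hxy.symm
  -- edge nodup decomposition
  have hnodE : ((p₁.edgeList ++ r.edgeList) ++ p₂.edgeList).Nodup := by
    have := hp.edgeList_nodup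
    rwa [hel] at this
  obtain ⟨hE12, hE3, hdE13⟩ := list_nodup_append_disj.1 hnodE
  obtain ⟨hE1, hE2, hdE12⟩ := list_nodup_append_disj.1 hE12
  -- vertex nodup decomposition
  have hnodV : ((p₁.vertList.dropLast ++ r.vertList.dropLast) ++ p₂.vertList).Nodup := by
    have : p.vertList.Nodup := hp
    rwa [hvl] at this
  obtain ⟨hV12, hV3, hdV13⟩ := list_nodup_append_disj.1 hnodV
  obtain ⟨hV1, hV2, hdV12⟩ := list_nodup_append_disj.1 hV12
  -- basic shapes
  obtain ⟨m₁, hm₁⟩ := p₁.vertList_eq_cons          -- p₁.vertList = b :: m₁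
  obtain ⟨lA, hlA⟩ := p₁.exists_concat_vertList     -- p₁.vertList = lA ++ [u]
  have hlA' : p₁.vertList.dropLast = lA := by rw [hlA, List.dropLast_concat]
  obtain ⟨lB, hlB⟩ := r.exists_concat_vertList      -- r.vertList = lB ++ [v]
  have hlB' : r.vertList.dropLast = lB := by rw [hlB, List.dropLast_concat]
  obtain ⟨m₂, hm₂⟩ := p₂.vertList_eq_cons           -- p₂.vertList = v :: m₂
  have hu_mem_B : u ∈ r.vertList.dropLast := by
    obtain ⟨mr, hmr⟩ := r.vertList_eq_cons
    have hmr_ne : mr ≠ [] := by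
      intro h
      rw [h] at hmr
      have := r.end_mem_vertList
      rw [hmr] at this
      simp at this
      exact huv this.symm
    rw [hmr, Multigraph.Walk.dropLast_cons_of_ne_nil _ hmr_ne]
    simp
  have hv_mem_C : v ∈ p₂.vertList := p₂.start_mem_vertList
  -- paths
  have hp₁ : p₁.IsPath := by
    unfold Multigraph.Walk.IsPath
    rw [hlA, list_nodup_append_disj]
    refine ⟨hlA' ▸ hV1, List.nodup_singleton u, ?_⟩
    intro z hz hz'
    rw [List.mem_singleton] at hz'
    subst hz'
    exact hdV12 (hlA' ▸ hz) hu_mem_B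
  have hr : r.IsPath := by
    unfold Multigraph.Walk.IsPath
    rw [hlB, list_nodup_append_disj]
    refine ⟨hlB' ▸ hV2, List.nodup_singleton v, ?_⟩
    intro z hz hz'
    rw [List.mem_singleton] at hz'
    subst hz'
    exact hdV13 (List.mem_append_right _ (hlB' ▸ hz)) hv_mem_C
  have hp₂ : p₂.IsPath := hV3
  -- r is nonempty
  have hrne : r.edgeList ≠ [] := r.edgeList_ne_nil_of_ne huv
  -- membership in P
  have hmemP : ∀ f, f ∈ P ↔ (f ∈ p₁.edgeList ∨ f ∈ r.edgeList ∨ f ∈ p₂.edgeList) := by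
    intro f
    rw [← hps]
    show f ∈ p.edgeList ↔ _
    rw [hel]
    simp [or_assoc]
  -- vertices of subwalks are in p
  have hmem_p₁_vl : ∀ z ∈ p₁.vertList, z ∈ p.vertList := by
    intro z hz
    rw [hvl]
    rw [hlA] at hz
    rcases List.mem_append.1 hz with h1 | h1
    · exact List.mem_append_left _ (List.mem_append_left _ (hlA' ▸ h1))
    · rw [List.mem_singleton] at h1
      subst h1
      exact List.mem_append_left _ (List.mem_append_right _ hu_mem_B)
  have hmem_r_vl : ∀ z ∈ r.vertList, z ∈ p.vertList := by
    intro z hz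
    rw [hvl]
    rw [hlB] at hz
    rcases List.mem_append.1 hz with h1 | h1
    · exact List.mem_append_left _ (List.mem_append_right _ (hlB' ▸ h1))
    · rw [List.mem_singleton] at h1
      subst h1
      exact List.mem_append_right _ hv_mem_C
  have hmem_p₂_vl : ∀ z ∈ p₂.vertList, z ∈ p.vertList := by
    intro z hz
    rw [hvl]
    exact List.mem_append_right _ hz
  -- the path Q' from u to v
  have hQ'path : Ω.toMultigraph.IsPathSet u v w'.edgeSet := by
    rcases hcase with ⟨rfl, rfl⟩ | ⟨rfl, rfl⟩
    · exact ⟨w', hw'p, rfl⟩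
    · exact Multigraph.IsPathSet.reverse ⟨w', hw'p, rfl⟩
  -- the walk w₂ realizing P''
  have hinc2 : Ω.inc e = s(b, a) := by rw [hinc]; exact Sym2.eq_swap
  set w₂ : Ω.toMultigraph.Walk u v :=
    p₁.reverse.append (Multigraph.Walk.cons e hinc2 p₂.reverse) with hw₂def
  have hw₂vl : w₂.vertList = m₁.reverse ++ b :: p₂.vertList.reverse := by
    rw [hw₂def, Multigraph.Walk.vertList_append, Multigraph.Walk.vertList_cons,
      Multigraph.Walk.vertList_reverse, Multigraph.Walk.vertList_reverse, hm₁]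
    simp
  have hw₂el : w₂.edgeList = p₁.edgeList.reverse ++ e :: p₂.edgeList.reverse := by
    rw [hw₂def, Multigraph.Walk.edgeList_append, Multigraph.Walk.edgeList_cons,
      Multigraph.Walk.edgeList_reverse, Multigraph.Walk.edgeList_reverse]
  have hw₂ne : w₂.edgeList ≠ [] := by
    rw [hw₂el]
    simp
  have hdisj_p₁_p₂ : ∀ z ∈ p₁.vertList, z ∉ p₂.vertList := by
    intro z hz hz'
    rw [hlA] at hz
    rcases List.mem_append.1 hz with h1 | h1
    · exact hdV13 (List.mem_append_left _ (hlA' ▸ h1)) hz'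
    · rw [List.mem_singleton] at h1
      subst h1
      exact hdV13 (List.mem_append_right _ hu_mem_B) hz'
  have hw₂p : w₂.IsPath := by
    unfold Multigraph.Walk.IsPath
    rw [hw₂vl]
    have hperm : (m₁.reverse ++ b :: p₂.vertList.reverse).Perm
        ((b :: m₁) ++ p₂.vertList) := by
      refine (List.perm_middle).trans ?_
      refine List.Perm.cons b ?_
      exact List.Perm.append (List.reverse_perm m₁) (List.reverse_perm p₂.vertList)
    rw [List.Perm.nodup_iff hperm]
    rw [← hm₁, list_nodup_append_disj]
    exact ⟨hp₁, hV3, fun z hz hz' => hdisj_p₁_p₂ z hz hz'⟩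
  have hP''path : Ω.toMultigraph.IsPathSet u v w₂.edgeSet := ⟨w₂, hw₂p, rfl⟩
  have hmemw₂ : ∀ f, f ∈ w₂.edgeSet ↔ (f ∈ p₁.edgeList ∨ f = e ∨ f ∈ p₂.edgeList) := by
    intro f
    show f ∈ w₂.edgeList ↔ _
    rw [hw₂el]
    simp
  -- vertices of w₂ are in p
  have hmem_w₂_vl : ∀ z ∈ w₂.vertList, z ∈ p.vertList := by
    intro z hz
    rw [hw₂vl] at hz
    rcases List.mem_append.1 hz with h1 | h1
    · refine hmem_p₁_vl z ?_
      rw [hm₁]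
      exact List.mem_cons_of_mem _ (List.mem_reverse.1 h1)
    · rcases List.mem_cons.1 h1 with rfl | h2
      · exact hmem_p₁_vl z (by rw [hm₁]; simp)
      · exact hmem_p₂_vl z (List.mem_reverse.1 h2)
  -- VSet computations
  have hVR : Ω.toMultigraph.VSet r.edgeSet = {z | z ∈ r.vertList} :=
    Multigraph.vset_eq_vertList r hrne
  have hVQ' : Ω.toMultigraph.VSet w'.edgeSet = {z | z ∈ w'.vertList} :=
    Multigraph.vset_eq_vertList w' hw'ne
  have hVP'' : Ω.toMultigraph.VSet w₂.edgeSet = {z | z ∈ w₂.vertList} :=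
    Multigraph.vset_eq_vertList w₂ hw₂ne
  have hxy_uv : ∀ z : V, (z = x ∨ z = y) → z ∈ ({u, v} : Set V) := by
    intro z hz
    rcases hcase with ⟨rfl, rfl⟩ | ⟨rfl, rfl⟩
    · rcases hz with rfl | rfl
      · exact Set.mem_insert _ _
      · exact Set.mem_insert_of_mem _ rfl
    · rcases hz with rfl | rfl
      · exact Set.mem_insert_of_mem _ rfl
      · exact Set.mem_insert _ _
  have cond1 : Ω.toMultigraph.VSet r.edgeSet ∩ Ω.toMultigraph.VSet w'.edgeSet
      ⊆ ({u, v} : Set V) := by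
    rintro z ⟨h1, h2⟩
    rw [hVR] at h1
    rw [hVQ'] at h2
    exact hxy_uv z (hvcond z h2 (hmem_r_vl z h1))
  have cond2 : Ω.toMultigraph.VSet w'.edgeSet ∩ Ω.toMultigraph.VSet w₂.edgeSet
      ⊆ ({u, v} : Set V) := by
    rintro z ⟨h1, h2⟩
    rw [hVQ'] at h1
    rw [hVP''] at h2
    exact hxy_uv z (hvcond z h1 (hmem_w₂_vl z h2))
  have hzp₁u : ∀ z, z ∈ p₁.vertList → z ∈ r.vertList.dropLast → z = u := by
    intro z hz1 hzB
    rw [hlA] at hz1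
    rcases List.mem_append.1 hz1 with h4 | h4
    · exact absurd hzB (fun hh => hdV12 (hlA' ▸ h4) hh)
    · exact List.mem_singleton.1 h4
  have cond3 : Ω.toMultigraph.VSet r.edgeSet ∩ Ω.toMultigraph.VSet w₂.edgeSet
      ⊆ ({u, v} : Set V) := by
    rintro z ⟨h1, h2⟩
    rw [hVR] at h1
    rw [hVP''] at h2
    rw [hlB] at h1
    rcases List.mem_append.1 h1 with hB | hB
    swap
    · rw [List.mem_singleton] at hB
      subst hB
      exact Set.mem_insert_of_mem _ rfl
    · have hzB : z ∈ r.vertList.dropLast := hlB' ▸ hB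
      rw [hw₂vl] at h2
      rcases List.mem_append.1 h2 with h3 | h3
      · have hz1 : z ∈ p₁.vertList := by
          rw [hm₁]
          exact List.mem_cons_of_mem _ (List.mem_reverse.1 h3)
        rw [hzp₁u z hz1 hzB]
        exact Set.mem_insert _ _
      · rcases List.mem_cons.1 h3 with rfl | h4
        · have hz1 : z ∈ p₁.vertList := by rw [hm₁]; simp
          rw [hzp₁u z hz1 hzB]
          exact Set.mem_insert _ _
        · exact absurd (List.mem_reverse.1 h4)
            (fun hh => hdV13 (List.mem_append_right _ hzB) hh)
  -- subsets and disjointness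
  have hQ'subQ : w'.edgeSet ⊆ Q := by
    intro f hf
    rw [← hqs]
    exact hsubq f hf
  have hQ'disjP : Disjoint w'.edgeSet P := by
    rw [Set.disjoint_left]
    intro f hf hfP
    rw [← hps] at hfP
    exact hnotp f hf hfP
  have hRsubP : r.edgeSet ⊆ P := by
    intro f hf
    rw [hmemP f]
    exact Or.inr (Or.inl hf)
  have dRQ' : Disjoint r.edgeSet w'.edgeSet := (hQ'disjP.mono_right hRsubP).symm
  have heQ' : e ∉ w'.edgeSet := fun hh => heQ (hQ'subQ hh)
  have dQ'P'' : Disjoint w'.edgeSet w₂.edgeSet := by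
    rw [Set.disjoint_left]
    intro f hf hf2
    rw [hmemw₂ f] at hf2
    rcases hf2 with h1 | rfl | h1
    · exact Set.disjoint_left.1 hQ'disjP hf (by rw [hmemP f]; exact Or.inl h1)
    · exact heQ' hf
    · exact Set.disjoint_left.1 hQ'disjP hf (by rw [hmemP f]; exact Or.inr (Or.inr h1))
  have dRP'' : Disjoint r.edgeSet w₂.edgeSet := by
    rw [Set.disjoint_left]
    intro f hf hf2
    rw [hmemw₂ f] at hf2
    rcases hf2 with h1 | rfl | h1
    · exact hdE12 h1 hf
    · exact heP (hRsubP hf)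
    · exact hdE13 (List.mem_append_right _ hf) h1
  have hRpath : Ω.toMultigraph.IsPathSet u v r.edgeSet := ⟨r, hr, rfl⟩
  have ht : Ω.toMultigraph.IsTheta u v r.edgeSet w'.edgeSet w₂.edgeSet :=
    ⟨huv, hRpath, hQ'path, hP''path, dRQ', dQ'P'', dRP'', cond1, cond2, cond3⟩
  have parity := Ω.theta_parity hnt ht
  have hEq1 : r.edgeSet ∪ w₂.edgeSet = P ∪ {e} := by
    ext f
    rw [Set.mem_union, Set.mem_union, hmemw₂ f, hmemP f, Set.mem_singleton_iff,
      Multigraph.Walk.mem_edgeSet]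
    constructor
    · rintro (h1 | h1 | rfl | h1)
      · exact Or.inl (Or.inr (Or.inl h1))
      · exact Or.inl (Or.inl h1)
      · exact Or.inr rfl
      · exact Or.inl (Or.inr (Or.inr h1))
    · rintro ((h1 | h1 | h1) | rfl)
      · exact Or.inr (Or.inl h1)
      · exact Or.inl h1
      · exact Or.inr (Or.inr (Or.inr h1))
      · exact Or.inr (Or.inr (Or.inl rfl))
  have hEq2 : w'.edgeSet ∪ w₂.edgeSet = ((P \ r.edgeSet) ∪ w'.edgeSet) ∪ {e} := by
    ext f
    have h3 : f ∈ p₁.edgeList → ¬ f ∈ r.edgeList := fun hf hr' => hdE12 hf hr'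
    have h4 : f ∈ p₂.edgeList → ¬ f ∈ r.edgeList :=
      fun hf hr' => hdE13 (List.mem_append_right _ hr') hf
    rw [Set.mem_union, Set.mem_union, Set.mem_union, Set.mem_diff, hmemw₂ f, hmemP f,
      Set.mem_singleton_iff, Multigraph.Walk.mem_edgeSet (w := r)]
    constructor
    · rintro (h1 | h1 | rfl | h1)
      · exact Or.inl (Or.inr h1)
      · exact Or.inl (Or.inl ⟨Or.inl h1, h3 h1⟩)
      · exact Or.inr rfl
      · exact Or.inl (Or.inl ⟨Or.inr (Or.inr h1), h4 h1⟩)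
    · rintro ((⟨(h1 | h1 | h1), h2⟩ | h1) | rfl)
      · exact Or.inr (Or.inl h1)
      · exact absurd h1 h2
      · exact Or.inr (Or.inr (Or.inr h1))
      · exact Or.inl h1
      · exact Or.inr (Or.inr (Or.inl rfl))
  have cyc1 : Ω.toMultigraph.IsCycleSet (r.edgeSet ∪ w'.edgeSet) :=
    Multigraph.cycleSet_of_two_paths huv hRpath hQ'path dRQ' cond1
  have cyc2 : Ω.toMultigraph.IsCycleSet (w'.edgeSet ∪ w₂.edgeSet) :=
    Multigraph.cycleSet_of_two_paths huv hQ'path hP''path dQ'P'' cond2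
  refine ⟨r.edgeSet, w'.edgeSet, hRsubP, hQ'subQ, hQ'disjP, cyc1, ?_, ?_⟩
  · rw [← hEq2]
    exact cyc2
  · rw [← hEq1, ← hEq2]
    exact parity

end BiasedGraph

theorem chain_exists_member {α : Type*} {c : Set (Set α)} (hc : IsChain (· ⊆ ·) c)
    (hne : c.Nonempty) {S : Set α} (hS : S.Finite) : S ⊆ ⋃₀ c → ∃ t ∈ c, S ⊆ t := by
  refine Set.Finite.induction_on S hS (motive := fun S _ => S ⊆ ⋃₀ c → ∃ t ∈ c, S ⊆ t) ?_ ?_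
  · intro _
    obtain ⟨t, ht⟩ := hne
    exact ⟨t, ht, by simp⟩
  · intro a s _ _ ih hsub
    obtain ⟨t₁, ht₁, hst₁⟩ := ih fun z hz => hsub (Set.mem_insert_of_mem _ hz)
    obtain ⟨t₂, ht₂, hat₂⟩ := Set.mem_sUnion.1 (hsub (Set.mem_insert _ _))
    by_cases h12 : t₁ = t₂
    · exact ⟨t₂, ht₂, Set.insert_subset_iff.2 ⟨hat₂, h12 ▸ hst₁⟩⟩
    · rcases hc ht₁ ht₂ h12 with h | h
      · exact ⟨t₂, ht₂, Set.insert_subset_iff.2 ⟨hat₂, hst₁.trans h⟩⟩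
      · exact ⟨t₁, ht₁, Set.insert_subset_iff.2 ⟨h hat₂, hst₁⟩⟩

theorem stmt4_backward {V : Type u} {E : Type v} (Ω : BiasedGraph V E)
    (hnt : ¬ ∃ X, Ω.IsContraTheta X) :
    ∃ Sg : Set E, ∀ C, Ω.toMultigraph.IsCycleSet C →
      (Ω.Balanced C ↔ Even (C ∩ Sg).ncard) := by
  classical
  set A : Set (Set E) := {X | ∀ C ⊆ X, ¬ Ω.toMultigraph.IsCycleSet C} with hA
  have h0 : (∅ : Set E) ∈ A := by
    intro C hC hcyc
    obtain ⟨f, hf⟩ := hcyc.nonempty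
    exact hC hf
  obtain ⟨T, -, hTA, hTmax⟩ := zorn_subset_nonempty A
    (fun c hcA hc hcne => by
      refine ⟨⋃₀ c, ?_, fun s hs => Set.subset_sUnion_of_mem hs⟩
      intro C hC hcyc
      obtain ⟨t, ht, hCt⟩ := chain_exists_member hc hcne hcyc.finite hC
      exact hcA ht C hCt hcyc) ∅ h0
  have hTacyc : ∀ C ⊆ T, ¬ Ω.toMultigraph.IsCycleSet C := hTA
  have hfc0 : ∀ e : E, ∃ D : Set E, e ∉ T →
      (Ω.toMultigraph.IsCycleSet D ∧ D ⊆ insert e T ∧ e ∈ D) := by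
    intro e
    by_cases he : e ∈ T
    · exact ⟨∅, fun h => absurd he h⟩
    · have hmem : insert e T ∉ A := by
        intro hmem
        exact he (hTmax hmem (Set.subset_insert _ _) (Set.mem_insert e T))
      rw [hA, Set.mem_setOf_eq] at hmem
      push_neg at hmem
      obtain ⟨C, hC1, hC2⟩ := hmem
      refine ⟨C, fun _ => ⟨hC2, hC1, ?_⟩⟩
      by_contra heC
      refine hTacyc C ?_ hC2
      intro f hf
      rcases Set.mem_insert_iff.1 (hC1 hf) with h1 | h1
      · exact absurd (h1 ▸ hf) heC
      · exact h1
  choose fc hfc using hfc0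
  set Sg : Set E := {f | f ∉ T ∧ ¬ Ω.Balanced (fc f)} with hSgdef
  have base : ∀ (C : Set E) (e : E), Ω.toMultigraph.IsCycleSet C → e ∈ C → e ∉ T →
      C = fc e → C \ {e} ⊆ T → (Ω.Balanced C ↔ Even ((C ∩ Sg).ncard)) := by
    intro C e hC he heT hCfc hCT
    have hsub : C ∩ Sg ⊆ {e} := by
      rintro f ⟨hf1, hf2⟩
      by_contra hfe
      exact hf2.1 (hCT ⟨hf1, hfe⟩)
    by_cases hb : Ω.Balanced C
    · have hempty : C ∩ Sg = ∅ := by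
        refine Set.eq_empty_iff_forall_notMem.2 fun f hf => ?_
        have hfe : f = e := hsub hf
        subst hfe
        exact hf.2.2 (hCfc ▸ hb)
      rw [hempty]
      exact iff_of_true hb (by simp)
    · have hsingle : C ∩ Sg = {e} := by
        refine Set.Subset.antisymm hsub fun f hf => ?_
        rw [Set.mem_singleton_iff] at hf
        subst hf
        exact ⟨he, heT, fun hb2 => hb (hCfc ▸ hb2)⟩
      rw [hsingle, Set.ncard_singleton]
      exact iff_of_false hb (by simp)
  have main : ∀ n (C : Set E), Ω.toMultigraph.IsCycleSet C → (C \ T).ncard ≤ n →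
      (Ω.Balanced C ↔ Even ((C ∩ Sg).ncard)) := by
    intro n
    induction n with
    | zero =>
      intro C hC hle
      exfalso
      have hfin : (C \ T).Finite := hC.finite.diff
      have hempty : C \ T = ∅ := (Set.ncard_eq_zero hfin).1 (Nat.le_zero.1 hle)
      refine hTacyc C (fun f hf => ?_) hC
      by_contra hfT
      have : f ∈ C \ T := ⟨hf, hfT⟩
      rw [hempty] at this
      exact this
    | succ n ih =>
      intro C hC hle
      by_cases hle' : (C \ T).ncard ≤ n
      · exact ih C hC hle'
      have hCfin := hC.finite
      have hdfin : (C \ T).Finite := hCfin.diff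
      have hne : (C \ T).Nonempty := by
        rw [Set.nonempty_iff_ne_empty]
        intro h
        rw [h, Set.ncard_empty] at hle'
        exact hle' (Nat.zero_le _)
      obtain ⟨e, heC, heT⟩ := hne
      obtain ⟨hfc1, hfc2, hfc3⟩ := hfc e heT
      obtain ⟨a, b, hinc, hPps⟩ := hC.exists_pathSet_erase heC
      by_cases hab : a = b
      · subst hab
        have hCe : C = {e} := hC.eq_singleton_of_diag heC hinc
        have hfce : fc e = {e} := hfc1.eq_singleton_of_diag hfc3 hinc
        exact base C e hC heC heT (by rw [hCe, hfce]) (by rw [hCe]; simp)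
      obtain ⟨a₂, b₂, hinc₂, hQps'⟩ := hfc1.exists_pathSet_erase hfc3
      have hQps : Ω.toMultigraph.IsPathSet b a (fc e \ {e}) := by
        rcases Sym2.eq_iff.1 (hinc.symm.trans hinc₂) with ⟨h1, h2⟩ | ⟨h1, h2⟩
        · rw [h1, h2]
          exact hQps'
        · rw [← h1, ← h2] at hQps'
          exact hQps'.reverse
      set P : Set E := C \ {e} with hPdef
      set Q : Set E := fc e \ {e} with hQdef
      have heP : e ∉ P := fun h => h.2 rfl
      have heQ : e ∉ Q := fun h => h.2 rfl
      have hQT : Q ⊆ T := by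
        intro f hf
        rcases Set.mem_insert_iff.1 (hfc2 hf.1) with h1 | h1
        · exact absurd h1 hf.2
        · exact h1
      have hCPe : C = P ∪ {e} := by
        ext f
        constructor
        · intro hf
          by_cases hfe : f = e
          · exact Or.inr hfe
          · exact Or.inl ⟨hf, hfe⟩
        · rintro (hf | hf)
          · exact hf.1
          · rw [Set.mem_singleton_iff] at hf
            exact hf ▸ heC
      by_cases hsub : Q ⊆ P
      · have hQP : Q = P := Multigraph.IsPathSet.eq_of_subset hPps hQps hsub
        have hCfce : C = fc e := by
          rw [hCPe, ← hQP]
          ext f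
          constructor
          · rintro (hf | hf)
            · exact hf.1
            · rw [Set.mem_singleton_iff] at hf
              exact hf ▸ hfc3
          · intro hf
            by_cases hfe : f = e
            · exact Or.inr hfe
            · exact Or.inl ⟨hf, hfe⟩
        refine base C e hC heC heT hCfce ?_
        intro f hf
        exact hQT (hQP ▸ hf)
      · obtain ⟨R, Q', hRP, hQ'Q, hQ'P, cyc1, cyc2, hpar⟩ :=
          Ω.key_step hnt hinc hPps hQps heP heQ hsub
        set D' : Set E := R ∪ Q' with hD'def
        set C' : Set E := ((P \ R) ∪ Q') ∪ {e} with hC'def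
        have hQ'T : Q' ⊆ T := fun f hf => hQT (hQ'Q hf)
        have hRT : (R \ T).Nonempty := by
          rw [Set.nonempty_iff_ne_empty]
          intro hRT
          refine hTacyc D' ?_ cyc1
          rintro f (hf | hf)
          · by_contra hfT
            have : f ∈ R \ T := ⟨hf, hfT⟩
            rw [hRT] at this
            exact this
          · exact hQ'T hf
        obtain ⟨g, hgR, hgT⟩ := hRT
        have hD'T : D' \ T ⊆ (C \ T) \ {e} := by
          rintro f ⟨(h1 | h1), h2⟩
          · refine ⟨⟨(hRP h1).1, h2⟩, ?_⟩
            rw [Set.mem_singleton_iff]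
            intro hfe
            exact heP (hfe ▸ hRP h1)
          · exact absurd (hQ'T h1) h2
        have hD'le : (D' \ T).ncard ≤ n := by
          have hlt : (D' \ T).ncard < (C \ T).ncard := by
            refine Set.ncard_lt_ncard ⟨hD'T.trans Set.diff_subset, fun hcon => ?_⟩ hdfin
            have := hD'T (hcon ⟨heC, heT⟩)
            exact this.2 rfl
          omega
        have hC'T : C' \ T ⊆ C \ T := by
          rintro f ⟨((h1 | h1) | h1), h2⟩
          · exact ⟨h1.1.1, h2⟩
          · exact absurd (hQ'T h1) h2
          · rw [Set.mem_singleton_iff] at h1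
            exact ⟨h1 ▸ heC, h2⟩
        have hgC' : g ∉ C' \ T := by
          rintro ⟨((h1 | h1) | h1), -⟩
          · exact h1.2 hgR
          · exact hgT (hQ'T h1)
          · rw [Set.mem_singleton_iff] at h1
            exact heP (h1 ▸ hRP hgR)
        have hC'le : (C' \ T).ncard ≤ n := by
          have hlt : (C' \ T).ncard < (C \ T).ncard :=
            Set.ncard_lt_ncard ⟨hC'T, fun hcon => hgC' (hcon ⟨(hRP hgR).1, hgT⟩)⟩ hdfin
          omega
        have ihC' := ih C' cyc2 hC'le
        have ihD' := ih D' cyc1 hD'le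
        have hsplit : C ∩ Sg = (C' ∩ Sg) ∪ (D' ∩ Sg) := by
          ext f
          constructor
          · rintro ⟨hfC, hfS⟩
            by_cases hfR : f ∈ R
            · exact Or.inr ⟨Or.inl hfR, hfS⟩
            · rw [hCPe] at hfC
              rcases hfC with h1 | h1
              · exact Or.inl ⟨Or.inl (Or.inl ⟨h1, hfR⟩), hfS⟩
              · exact Or.inl ⟨Or.inr h1, hfS⟩
          · rintro (⟨hf1, hfS⟩ | ⟨hf1, hfS⟩)
            · refine ⟨?_, hfS⟩
              rcases hf1 with (h1 | h1) | h1
              · exact h1.1.1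
              · exact absurd (hQ'T h1) hfS.1
              · rw [hCPe]
                exact Or.inr h1
            · refine ⟨?_, hfS⟩
              rcases hf1 with h1 | h1
              · exact (hRP h1).1
              · exact absurd (hQ'T h1) hfS.1
        have hdisj2 : Disjoint (C' ∩ Sg) (D' ∩ Sg) := by
          rw [Set.disjoint_left]
          rintro f ⟨hf1, hfS⟩ ⟨hf2, -⟩
          rcases hf2 with h2 | h2
          swap
          · exact hfS.1 (hQ'T h2)
          rcases hf1 with (h1 | h1) | h1
          · exact h1.2 h2
          · exact hfS.1 (hQ'T h1)
          · rw [Set.mem_singleton_iff] at h1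
            exact heP (h1 ▸ hRP h2)
        have hncard : (C ∩ Sg).ncard = (C' ∩ Sg).ncard + (D' ∩ Sg).ncard := by
          rw [hsplit]
          exact Set.ncard_union_eq hdisj2 (cyc2.finite.inter_of_left _)
            (cyc1.finite.inter_of_left _)
        rw [← hCPe] at hpar
        rw [hncard, Nat.even_add, hpar, ihC', ihD']
  exact ⟨Sg, fun C hC => main ((C \ T).ncard) C hC le_rfl⟩
/-- A biased graph is a signed graph iff it has no contrabalanced theta. -/
theorem stmt4 {V E : Type*} (Ω : BiasedGraph V E) :
    (∃ Sg : Set E, ∀ C, Ω.toMultigraph.IsCycleSet C →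
        (Ω.Balanced C ↔ Even (C ∩ Sg).ncard)) ↔
      ¬ ∃ X, Ω.IsContraTheta X := by
  constructor
  · rintro ⟨Sg, hSg⟩ ⟨X, x, y, P₁, P₂, P₃, ht, hb12, hb23, hb13, rfl⟩
    obtain ⟨hxy, h1, h2, h3, d12, d23, d13, v12, v23, v13⟩ := ht
    have c12 := Multigraph.cycleSet_of_two_paths hxy h1 h2 d12 v12
    have c23 := Multigraph.cycleSet_of_two_paths hxy h2 h3 d23 v23
    have c13 := Multigraph.cycleSet_of_two_paths hxy h1 h3 d13 v13
    have f1 : (P₁ ∩ Sg).Finite := h1.finite.inter_of_left _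
    have f2 : (P₂ ∩ Sg).Finite := h2.finite.inter_of_left _
    have f3 : (P₃ ∩ Sg).Finite := h3.finite.inter_of_left _
    have key : ∀ (P Q : Set E), Disjoint P Q → (P ∩ Sg).Finite → (Q ∩ Sg).Finite →
        ((P ∪ Q) ∩ Sg).ncard = (P ∩ Sg).ncard + (Q ∩ Sg).ncard := by
      intro P Q hd hP hQ
      rw [Set.union_inter_distrib_right]
      exact Set.ncard_union_eq (hd.mono Set.inter_subset_left Set.inter_subset_left) hP hQ
    have o12 : ¬ Even ((P₁ ∩ Sg).ncard + (P₂ ∩ Sg).ncard) := by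
      rw [← key P₁ P₂ d12 f1 f2]
      exact fun h => hb12 ((hSg _ c12).2 h)
    have o23 : ¬ Even ((P₂ ∩ Sg).ncard + (P₃ ∩ Sg).ncard) := by
      rw [← key P₂ P₃ d23 f2 f3]
      exact fun h => hb23 ((hSg _ c23).2 h)
    have o13 : ¬ Even ((P₁ ∩ Sg).ncard + (P₃ ∩ Sg).ncard) := by
      rw [← key P₁ P₃ d13 f1 f3]
      exact fun h => hb13 ((hSg _ c13).2 h)
    rw [Nat.even_add] at o12 o23 o13
    tauto
  · exact fun hnt => stmt4_backward Ω hnt
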